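/- Let V_1,...,V_r be finite-dimensional subspaces of a vector space V. The maximum size of a subset J ⊆ {1,...,r} for which there exist linearly independent vectors v_i ∈ V_i (i ∈ J) equals min over I ⊆ {1,...,r} of (dim(∑_{i∈I} V_i) + r − |I|). -/

import Mathlib

open Module Submodule

section Aux

variable {F V : Type*} [Field F] [AddCommGroup V] [Module F V]

/-- An independent finite family inside a finite-dimensional submodule has card ≤ finrank. -/
lemma konig_card_le_finrank {ι : Type*} [Fintype ι] (M : Submodule F V)
    [FiniteDimensional F ↥M] (v : ι → V) (hv : ∀ i, v i ∈ M)
    (h : LinearIndependent F v) : Fintype.card ι ≤ finrank F ↥M := by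
  have h2 : LinearIndependent F (fun i => (⟨v i, hv i⟩ : M)) :=
    h.of_comp M.subtype
  exact h2.fintype_card_le_finrank

/-- Full (non-defect) linearized Rado theorem, by induction on the total dimension. -/
lemma konig_rado_full (n : ℕ) {r : ℕ} (Vs : Fin r → Submodule F V)
    (hfin : ∀ i, FiniteDimensional F ↥(Vs i))
    (hsum : ∑ i, finrank F ↥(Vs i) ≤ n)
    (hcond : ∀ I : Finset (Fin r), I.card ≤ finrank F ↥(I.sup Vs)) :
    ∃ v : Fin r → V, (∀ i, v i ∈ Vs i) ∧ LinearIndependent F v := by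
  induction n generalizing Vs with
  | zero =>
    -- condition with I = {i} gives 1 ≤ finrank (Vs i) = 0 unless r = 0.
    have hr : r = 0 := by
      by_contra h
      have i : Fin r := ⟨0, Nat.pos_of_ne_zero h⟩
      have h1 := hcond {i}
      rw [Finset.sup_singleton, Finset.card_singleton] at h1
      have h0 : finrank F ↥(Vs i) = 0 := by
        have h2 : finrank F ↥(Vs i) ≤ ∑ i, finrank F ↥(Vs i) := by
          simpa using Finset.single_le_sum (f := fun i => finrank F ↥(Vs i))
            (fun _ _ => Nat.zero_le _) (Finset.mem_univ i)
        omega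
      omega
    subst hr
    exact ⟨fun i => 0, fun i => i.elim0, linearIndependent_empty_type⟩
  | succ n ih =>
    by_cases hsmall : ∀ i, finrank F ↥(Vs i) ≤ 1
    · -- base case: all subspaces are lines
      have hone : ∀ i, finrank F ↥(Vs i) = 1 := by
        intro i
        have h1 := hcond {i}
        rw [Finset.sup_singleton, Finset.card_singleton] at h1
        have := hsmall i; omega
      choose v hv hv0 using fun i =>
        Submodule.exists_mem_ne_zero_of_ne_bot (p := Vs i)
          (by intro h; have := hone i; rw [h] at this; simp at this)
      have hspan : ∀ i, Vs i = span F {v i} := by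
        intro i
        refine (Submodule.eq_of_le_of_finrank_le ?_ ?_).symm
        · rw [span_le, Set.singleton_subset_iff]; exact hv i
        · rw [hone i, finrank_span_singleton (hv0 i)]
      refine ⟨v, hv, ?_⟩
      rw [linearIndependent_iff_card_eq_finrank_span]
      have hsup : span F (Set.range v) = Finset.univ.sup Vs := by
        rw [Submodule.span_range_eq_iSup, Finset.sup_eq_iSup]
        simp only [Finset.mem_univ, iSup_pos]
        exact iSup_congr (fun i => (hspan i).symm)
      have hge : r ≤ finrank F ↥(span F (Set.range v)) := by
        rw [hsup]
        simpa using hcond Finset.univ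
      have hle : finrank F ↥(span F (Set.range v)) ≤ r := by
        classical
        have := finrank_span_le_card (R := F) (Set.range v)
        calc finrank F ↥(span F (Set.range v)) ≤ (Set.range v).toFinset.card := this
          _ ≤ r := by
            rw [Set.toFinset_range]
            exact le_trans Finset.card_image_le (by simp)
      simp only [Set.finrank, Fintype.card_fin]
      omega
    · push_neg at hsmall
      obtain ⟨i₀, hi₀⟩ := hsmall
      have hd2 : 2 ≤ finrank F ↥(Vs i₀) := hi₀
      -- build two proper subspaces W, W' of Vs i₀ with W ⊔ W' = Vs i₀
      set d := finrank F ↥(Vs i₀) with hd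
      haveI : NeZero d := ⟨by omega⟩
      have h01 : (0 : Fin d) ≠ 1 := by
        have hv1 : ((1 : Fin d) : ℕ) = 1 % d := Fin.val_one' d
        intro h
        have : ((0 : Fin d) : ℕ) = ((1 : Fin d) : ℕ) := by rw [h]
        rw [Fin.val_zero, hv1, Nat.mod_eq_of_lt (by omega)] at this
        omega
      let b : Basis (Fin d) F ↥(Vs i₀) := Module.finBasis F ↥(Vs i₀)
      let P : Submodule F ↥(Vs i₀) := span F (b '' {j | j ≠ 0})
      let P' : Submodule F ↥(Vs i₀) := span F (b '' {j | j ≠ 1})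
      have hPtop : P ⊔ P' = ⊤ := by
        rw [← Submodule.span_union, ← Set.image_union]
        have huniv : ({j | j ≠ 0} ∪ {j | j ≠ 1} : Set (Fin d)) = Set.univ := by
          ext j; simp only [Set.mem_union, Set.mem_setOf_eq, Set.mem_univ, iff_true]
          by_contra h; push_neg at h
          exact h01 (by rw [← h.1, h.2])
        rw [huniv, Set.image_univ, b.span_eq]
      have hPlt : P ≠ ⊤ := by
        intro h
        have : b 0 ∈ P := h ▸ Submodule.mem_top
        exact (b.linearIndependent.notMem_span_image (by simp)) this
      have hP'lt : P' ≠ ⊤ := by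
        intro h
        have : b 1 ∈ P' := h ▸ Submodule.mem_top
        exact (b.linearIndependent.notMem_span_image (by simp)) this
      let W : Submodule F V := P.map (Vs i₀).subtype
      let W' : Submodule F V := P'.map (Vs i₀).subtype
      have hWle : W ≤ Vs i₀ := Submodule.map_subtype_le _ _
      have hW'le : W' ≤ Vs i₀ := Submodule.map_subtype_le _ _
      have hWfin : finrank F ↥W < d := by
        have e := (Submodule.equivMapOfInjective (Vs i₀).subtype (Submodule.injective_subtype _) P).symm
        rw [e.finrank_eq]
        exact Submodule.finrank_lt hPlt
      have hW'fin : finrank F ↥W' < d := by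
        have e := (Submodule.equivMapOfInjective (Vs i₀).subtype (Submodule.injective_subtype _) P').symm
        rw [e.finrank_eq]
        exact Submodule.finrank_lt hP'lt
      have hWsup : W ⊔ W' = Vs i₀ := by
        rw [← Submodule.map_sup, hPtop, Submodule.map_top, Submodule.range_subtype]
      have hWf : FiniteDimensional F ↥W := Submodule.finiteDimensional_of_le hWle
      have hW'f : FiniteDimensional F ↥W' := Submodule.finiteDimensional_of_le hW'le
      -- key claim: one of W, W' can replace Vs i₀
      have key : (∀ I : Finset (Fin r), I.card ≤ finrank F ↥(I.sup (Function.update Vs i₀ W))) ∨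
          (∀ I : Finset (Fin r), I.card ≤ finrank F ↥(I.sup (Function.update Vs i₀ W'))) := by
        by_contra h
        push_neg at h
        obtain ⟨⟨I, hI⟩, ⟨I', hI'⟩⟩ := h
        -- reduce to the case i₀ ∈ I, i₀ ∈ I'
        have hmem : ∀ (U : Submodule F V) (J : Finset (Fin r)),
            finrank F ↥(J.sup (Function.update Vs i₀ U)) < J.card → i₀ ∈ J := by
          intro U J hJ
          by_contra hne
          have : J.sup (Function.update Vs i₀ U) = J.sup Vs :=
            Finset.sup_congr rfl (fun j hj => Function.update_of_ne (by rintro rfl; exact hne hj) _ _)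
          rw [this] at hJ
          exact absurd (hcond J) (by omega)
        have hiI : i₀ ∈ I := hmem W I hI
        have hiI' : i₀ ∈ I' := hmem W' I' hI'
        have hsplit : ∀ (U : Submodule F V) (J : Finset (Fin r)), i₀ ∈ J →
            J.sup (Function.update Vs i₀ U) = U ⊔ (J.erase i₀).sup Vs := by
          intro U J hJ
          conv_lhs => rw [← Finset.insert_erase hJ]
          rw [Finset.sup_insert, Function.update_self]
          congr 1
          exact Finset.sup_congr rfl (fun j hj =>
            Function.update_of_ne (Finset.ne_of_mem_erase hj) _ _)
        rw [hsplit W I hiI] at hI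
        rw [hsplit W' I' hiI'] at hI'
        set S := (I.erase i₀).sup Vs with hS
        set S' := (I'.erase i₀).sup Vs with hS'
        have hSfin : FiniteDimensional F ↥S := by
          rw [hS]; exact Submodule.finiteDimensional_finset_sup _ _
        have hS'fin : FiniteDimensional F ↥S' := by
          rw [hS']; exact Submodule.finiteDimensional_finset_sup _ _
        have hAfin : FiniteDimensional F ↥(W ⊔ S) := Submodule.finiteDimensional_sup _ _
        have hBfin : FiniteDimensional F ↥(W' ⊔ S') := Submodule.finiteDimensional_sup _ _
        have hdim := Submodule.finrank_sup_add_finrank_inf_eq (W ⊔ S) (W' ⊔ S')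
        -- the sup
        have hsupeq : (W ⊔ S) ⊔ (W' ⊔ S') = (I ∪ I').sup Vs := by
          have h1 : (W ⊔ S) ⊔ (W' ⊔ S') = (W ⊔ W') ⊔ (S ⊔ S') := by
            rw [sup_assoc, sup_assoc]; congr 1
            rw [← sup_assoc, ← sup_assoc, sup_comm S W']
          rw [h1, hWsup, hS, hS', ← Finset.sup_union]
          conv_rhs => rw [← Finset.insert_erase (Finset.mem_union_left I' hiI)]
          rw [Finset.sup_insert]
          congr 1
          rw [Finset.erase_union_distrib]
        have hsupge : (I ∪ I').card ≤ finrank F ↥((W ⊔ S) ⊔ (W' ⊔ S')) := by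
          rw [hsupeq]; exact hcond _
        -- the inf
        have hinfge : ((I ∩ I').erase i₀).card ≤ finrank F ↥((W ⊔ S) ⊓ (W' ⊔ S')) := by
          have hle : ((I ∩ I').erase i₀).sup Vs ≤ (W ⊔ S) ⊓ (W' ⊔ S') := by
            apply le_inf
            · refine le_trans ?_ le_sup_right
              apply Finset.sup_mono
              intro x hx
              rw [Finset.mem_erase] at hx ⊢
              exact ⟨hx.1, Finset.mem_of_mem_inter_left hx.2⟩
            · refine le_trans ?_ le_sup_right
              apply Finset.sup_mono
              intro x hx
              rw [Finset.mem_erase] at hx ⊢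
              exact ⟨hx.1, Finset.mem_of_mem_inter_right hx.2⟩
          calc ((I ∩ I').erase i₀).card ≤ finrank F ↥(((I ∩ I').erase i₀).sup Vs) := hcond _
            _ ≤ finrank F ↥((W ⊔ S) ⊓ (W' ⊔ S')) := by
                have : FiniteDimensional F ↥((W ⊔ S) ⊓ (W' ⊔ S')) :=
                  Submodule.finiteDimensional_of_le inf_le_left
                exact Submodule.finrank_mono hle
        have hcardu := Finset.card_union_add_card_inter I I'
        have hiII' : i₀ ∈ I ∩ I' := Finset.mem_inter.mpr ⟨hiI, hiI'⟩
        have hcarde : ((I ∩ I').erase i₀).card = (I ∩ I').card - 1 :=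
          Finset.card_erase_of_mem hiII'
        have hIpos : 1 ≤ (I ∩ I').card := Finset.card_pos.mpr ⟨i₀, hiII'⟩
        omega
      -- apply induction hypothesis with the smaller system
      have finish : ∀ U : Submodule F V, U ≤ Vs i₀ → finrank F ↥U < d →
          (∀ I : Finset (Fin r), I.card ≤ finrank F ↥(I.sup (Function.update Vs i₀ U))) →
          ∃ v : Fin r → V, (∀ i, v i ∈ Vs i) ∧ LinearIndependent F v := by
        intro U hUle hUlt hUcond
        have hUfd : FiniteDimensional F ↥U := Submodule.finiteDimensional_of_le hUle
        have hfin' : ∀ i, FiniteDimensional F ↥(Function.update Vs i₀ U i) := by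
          intro i
          rcases eq_or_ne i i₀ with rfl | h
          · rw [Function.update_self]; exact hUfd
          · rw [Function.update_of_ne h]; exact hfin i
        have hsum' : ∑ i, finrank F ↥(Function.update Vs i₀ U i) ≤ n := by
          have h2 : ∑ i, finrank F ↥(Function.update Vs i₀ U i) =
              finrank F ↥U + ∑ i ∈ Finset.univ \ {i₀}, finrank F ↥(Vs i) := by
            rw [show (∑ i, finrank F ↥(Function.update Vs i₀ U i)) =
                ∑ i, Function.update (fun i => finrank F ↥(Vs i)) i₀ (finrank F ↥U) i from
              Finset.sum_congr rfl (fun i _ => by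
                rcases eq_or_ne i i₀ with rfl | h
                · rw [Function.update_self, Function.update_self]
                · rw [Function.update_of_ne h, Function.update_of_ne h])]
            rw [Finset.sum_update_of_mem (Finset.mem_univ i₀)]
          have h3 : ∑ i, finrank F ↥(Vs i) =
              finrank F ↥(Vs i₀) + ∑ i ∈ Finset.univ \ {i₀}, finrank F ↥(Vs i) := by
            rw [Finset.sum_eq_add_sum_sdiff_singleton_of_mem (Finset.mem_univ i₀)]
          omega
        obtain ⟨v, hv, hind⟩ := ih (Function.update Vs i₀ U) hfin' hsum' hUcond
        refine ⟨v, fun i => ?_, hind⟩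
        rcases eq_or_ne i i₀ with rfl | h
        · have := hv i; rw [Function.update_self] at this; exact hUle this
        · have := hv i; rwa [Function.update_of_ne h] at this
      rcases key with h | h
      · exact finish W hWle hWfin h
      · exact finish W' hW'le hW'fin h

end Aux

/-- **Linearized König theorem (defect form of Rado's theorem).** For finite-dimensional
subspaces `V 1, ..., V r` of a vector space `V`, the maximum size of a subset
`J ⊆ [r]` admitting linearly independent representatives `v i ∈ V i` (`i ∈ J`) equals
`min_{I ⊆ [r]} (dim (∑_{i ∈ I} V i) + r - |I|)`. -/
theorem linearized_konig {F V : Type*} [Field F] [AddCommGroup V] [Module F V] {r : ℕ}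
    (Vs : Fin r → Submodule F V) (hfin : ∀ i, FiniteDimensional F ↥(Vs i)) :
    IsGreatest {k : ℕ | ∃ J : Finset (Fin r), J.card = k ∧
        ∃ v : Fin r → V, (∀ i ∈ J, v i ∈ Vs i) ∧
          LinearIndependent F (fun i : ↥J => v i)}
      (⨅ I : Finset (Fin r), (Module.finrank F ↥(⨆ i ∈ I, Vs i) + r - I.card)) := by
  classical
  have hfinsup : ∀ I : Finset (Fin r), FiniteDimensional F ↥(I.sup Vs) := fun I =>
    Submodule.finiteDimensional_finset_sup _ _
  have hbsup : ∀ I : Finset (Fin r), (⨆ i ∈ I, Vs i) = I.sup Vs := fun I =>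
    (Finset.sup_eq_iSup I Vs).symm
  set m := ⨅ I : Finset (Fin r), (finrank F ↥(⨆ i ∈ I, Vs i) + r - I.card) with hm
  have hmle : ∀ I : Finset (Fin r), m ≤ finrank F ↥(I.sup Vs) + r - I.card := by
    intro I
    have := ciInf_le' (fun I : Finset (Fin r) => finrank F ↥(⨆ i ∈ I, Vs i) + r - I.card) I
    rwa [hbsup I] at this
  have hIler : ∀ I : Finset (Fin r), I.card ≤ r := fun I => by
    simpa using Finset.card_le_card (Finset.subset_univ I)
  have hmr : m ≤ r := by
    have h := hmle ∅
    have hbot : ((∅ : Finset (Fin r)).sup Vs) = ⊥ := Finset.sup_empty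
    rw [hbot] at h
    simpa [finrank_bot] using h
  set d := r - m with hdd
  constructor
  · -- membership: construct J of size m
    -- work in the product space
    set W := V × (Fin d → F) with hW
    set inl := LinearMap.inl F V (Fin d → F) with hinl
    set Q := Submodule.snd F V (Fin d → F) with hQ
    have hQfin : FiniteDimensional F ↥Q :=
      LinearEquiv.finiteDimensional (Submodule.sndEquiv F V (Fin d → F)).symm
    have hQrank : finrank F ↥Q = d := by
      rw [(Submodule.sndEquiv F V (Fin d → F)).finrank_eq, Module.finrank_fin_fun]
    have hmapfin : ∀ M : Submodule F V, FiniteDimensional F ↥M →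
        FiniteDimensional F ↥(M.map inl) := fun M hM =>
      LinearEquiv.finiteDimensional (Submodule.equivMapOfInjective inl LinearMap.inl_injective M)
    have hmaprank : ∀ M : Submodule F V, finrank F ↥(M.map inl) = finrank F ↥M := fun M =>
      ((Submodule.equivMapOfInjective inl LinearMap.inl_injective M).finrank_eq).symm
    have hdisj : ∀ M : Submodule F V, (M.map inl) ⊓ Q = ⊥ := by
      intro M
      rw [eq_bot_iff]
      rintro ⟨x, y⟩ ⟨hx, hy⟩
      obtain ⟨z, _, hz⟩ := hx
      have hy0 : x = 0 := by
        simpa [hQ, Submodule.snd, Submodule.mem_comap] using hy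
      have hzz : (z, (0 : Fin d → F)) = (x, y) := hz
      have hyy : y = 0 := by injection hzz with h1 h2; exact h2.symm
      simp [hy0, hyy]
    have hsuprank : ∀ M : Submodule F V, FiniteDimensional F ↥M →
        finrank F ↥(M.map inl ⊔ Q) = finrank F ↥M + d := by
      intro M hM
      haveI := hmapfin M hM
      have h := Submodule.finrank_sup_add_finrank_inf_eq (M.map inl) Q
      rw [hdisj M, finrank_bot, hmaprank M, hQrank] at h
      omega
    set Vs' : Fin r → Submodule F W := fun i => (Vs i).map inl ⊔ Q with hVs'
    have hfin' : ∀ i, FiniteDimensional F ↥(Vs' i) := by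
      intro i
      haveI := hmapfin (Vs i) (hfin i)
      exact Submodule.finiteDimensional_sup _ _
    have hcond' : ∀ I : Finset (Fin r), I.card ≤ finrank F ↥(I.sup Vs') := by
      intro I
      rcases I.eq_empty_or_nonempty with rfl | ⟨i, hi⟩
      · simp
      · have hle1 : (I.sup Vs).map inl ≤ I.sup Vs' := by
          rw [Submodule.map_le_iff_le_comap]
          apply Finset.sup_le
          intro j hj
          refine le_trans ?_ (Submodule.comap_mono (Finset.le_sup hj))
          rw [← Submodule.map_le_iff_le_comap]
          exact le_sup_left
        have hQle : Q ≤ I.sup Vs' :=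
          le_trans (le_sup_right : Q ≤ (Vs i).map inl ⊔ Q) (Finset.le_sup (f := Vs') hi)
        have hle : (I.sup Vs).map inl ⊔ Q ≤ I.sup Vs' := sup_le hle1 hQle
        haveI : ∀ i, FiniteDimensional F ↥(Vs' i) := hfin'
        haveI : FiniteDimensional F ↥(I.sup Vs') :=
          Submodule.finiteDimensional_finset_sup _ _
        calc I.card ≤ finrank F ↥(I.sup Vs) + d := by
              have := hmle I; have := hIler I; omega
          _ = finrank F ↥((I.sup Vs).map inl ⊔ Q) := (hsuprank _ (hfinsup I)).symm
          _ ≤ finrank F ↥(I.sup Vs') := Submodule.finrank_mono hle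
    obtain ⟨w, hw, hwind⟩ := konig_rado_full (∑ i, finrank F ↥(Vs' i)) Vs' hfin' le_rfl hcond'
    set v : Fin r → V := fun i => (w i).1 with hv
    have hvmem : ∀ i, v i ∈ Vs i := by
      intro i
      obtain ⟨a, ha, b, hb, hab⟩ := Submodule.mem_sup.mp (hw i)
      obtain ⟨x, hx, rfl⟩ := ha
      have hb1 : b.1 = 0 := (Submodule.mem_bot F).mp (Submodule.mem_comap.mp hb)
      have hvx : v i = x := by
        rw [hv]
        simp only [← hab]
        rw [Prod.fst_add, hb1, add_zero]
        rfl
      rw [hvx]; exact hx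
    haveI := hfinsup Finset.univ
    have hspanfin : FiniteDimensional F ↥(span F (Set.range v)) := by
      have hle : span F (Set.range v) ≤ Finset.univ.sup Vs := by
        rw [Submodule.span_le]; rintro x ⟨i, rfl⟩
        exact Finset.le_sup (f := Vs) (Finset.mem_univ i) (hvmem i)
      exact Submodule.finiteDimensional_of_le hle
    have hwr : finrank F ↥(span F (Set.range w)) = r := by
      rw [finrank_span_eq_card hwind, Fintype.card_fin]
    have hwle : span F (Set.range w) ≤ (span F (Set.range v)).map inl ⊔ Q := by
      rw [Submodule.span_le]; rintro x ⟨i, rfl⟩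
      have hwi : w i = inl (v i) + ((0 : V), (w i).2) := by
        apply Prod.ext
        · simp [hinl, hv]
        · simp [hinl]
      rw [hwi]
      refine Submodule.add_mem _ (Submodule.mem_sup_left ?_) (Submodule.mem_sup_right ?_)
      · exact ⟨v i, Submodule.subset_span ⟨i, rfl⟩, rfl⟩
      · exact Submodule.mem_comap.mpr ((Submodule.mem_bot F).mpr rfl)
    have hrank : m ≤ finrank F ↥(span F (Set.range v)) := by
      have h5 := hsuprank (span F (Set.range v)) hspanfin
      haveI := hmapfin _ hspanfin
      haveI : FiniteDimensional F ↥((span F (Set.range v)).map inl ⊔ Q) :=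
        Submodule.finiteDimensional_sup _ _
      have h6 : finrank F ↥(span F (Set.range w)) ≤
          finrank F ↥((span F (Set.range v)).map inl ⊔ Q) := Submodule.finrank_mono hwle
      omega
    -- extract an independent subfamily of size m
    obtain ⟨bset, hbsub, hbspan, hbind⟩ := exists_linearIndependent F (Set.range v)
    have hbfin : bset.Finite := (Set.finite_range v).subset hbsub
    haveI := hbfin.fintype
    have hbcard : m ≤ Fintype.card ↥bset := by
      have hc := finrank_span_set_eq_card (s := bset) hbind
      rw [hbspan, Set.toFinset_card] at hc
      omega
    choose g hg using fun x : bset => hbsub x.2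
    have hginj : Function.Injective g := fun a b hab =>
      Subtype.ext (by rw [← hg a, ← hg b, hab])
    set J' : Finset (Fin r) := Finset.univ.image g with hJ'
    have hJ'card : J'.card = Fintype.card ↥bset := by
      rw [hJ', Finset.card_image_of_injective _ hginj, Finset.card_univ]
    obtain ⟨J, hJsub, hJcard⟩ := Finset.exists_subset_card_eq (s := J') (n := m) (by omega)
    refine ⟨J, hJcard, v, fun i _ => hvmem i, ?_⟩
    have hmemb : ∀ i : ↥J, v i ∈ bset := by
      intro i
      obtain ⟨x, -, hx⟩ := Finset.mem_image.mp (hJsub i.2)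
      rw [← hx, hg x]; exact x.2
    have hinj : Function.Injective (fun i : ↥J => (⟨v i, hmemb i⟩ : ↥bset)) := by
      intro a b hab
      have hva : v a = v b := congrArg Subtype.val hab
      obtain ⟨x, -, hx⟩ := Finset.mem_image.mp (hJsub a.2)
      obtain ⟨y, -, hy⟩ := Finset.mem_image.mp (hJsub b.2)
      apply Subtype.ext
      rw [← hx, ← hy]
      congr 1
      apply Subtype.ext
      have : (x : V) = (y : V) := by rw [← hg x, ← hg y, hx, hy]; exact hva
      exact this
    exact hbind.comp _ hinj
  · -- upper bound
    rintro k ⟨J, rfl, v, hv, hind⟩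
    apply le_ciInf
    intro I
    have h1 : (J \ I).card ≤ r - I.card := by
      have hsub : J \ I ⊆ Iᶜ := by
        intro x hx
        rw [Finset.mem_compl]
        exact (Finset.mem_sdiff.mp hx).2
      have := Finset.card_le_card hsub
      rwa [Finset.card_compl, Fintype.card_fin] at this
    have h2 : (J ∩ I).card ≤ finrank F ↥(⨆ i ∈ I, Vs i) := by
      rw [hbsup I]
      haveI := hfinsup I
      have hmem : ∀ i : ↥(J ∩ I), v i ∈ I.sup Vs := fun i =>
        Finset.le_sup (f := Vs) (Finset.mem_of_mem_inter_right i.2)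
          (hv i (Finset.mem_of_mem_inter_left i.2))
      have hinj : Function.Injective
          (fun i : ↥(J ∩ I) => (⟨i, Finset.mem_of_mem_inter_left i.2⟩ : ↥J)) := by
        intro a b h
        exact Subtype.ext (by simpa using congrArg Subtype.val h)
      have hind2 : LinearIndependent F (fun i : ↥(J ∩ I) => v i) :=
        hind.comp _ hinj
      have := konig_card_le_finrank (I.sup Vs) _ hmem hind2
      rwa [Fintype.card_coe] at this
    have h3 : (J \ I).card + (J ∩ I).card = J.card := Finset.card_sdiff_add_card_inter J I
    have h4 := hIler I
    omega
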